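/- Let S be a finite set, and let {Δ'_v}_{v∈S} and {Δ_v}_{v∈S} be collections of positive real numbers with Δ'_v < Δ_v for all v ∈ S. Then there exists a finite set Ξ of weighting functions ξ' : S → [0,1] with ∑_{v∈S} ξ'_v = 1, such that for any function ξ : S → ℝ_{≥0} satisfying ∑_{v∈S} ξ_v ≥ 1, there is some ξ' ∈ Ξ with ξ'_v Δ'_v ≤ ξ_v Δ_v for all v ∈ S. -/
import Mathlib

open Finset

lemma aux_reduce {S : Type*} [Fintype S] (N : ℕ) :
    ∀ (m : ℕ) (k : S → ℕ), ∑ v, k v - N = m → N ≤ ∑ v, k v →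
      ∃ k' : S → ℕ, (∀ v, k' v ≤ k v) ∧ ∑ v, k' v = N := by
  classical
  intro m
  induction m with
  | zero => exact fun k h hk => ⟨k, fun v => le_rfl, by omega⟩
  | succ n ih =>
    intro k h hk
    have hlt : N < ∑ v, k v := by omega
    have h0 : ∃ v, 0 < k v := by
      by_contra hc
      push_neg at hc
      simp only [Nat.le_zero] at hc
      have : ∑ v, k v = 0 := Finset.sum_eq_zero (fun v _ => hc v)
      omega
    obtain ⟨v, hv⟩ := h0
    set k₂ := Function.update k v (k v - 1) with hk₂
    have hsum : ∑ w, k₂ w = ∑ w, k w - 1 := by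
      have e1 : ∑ x ∈ Finset.univ.erase v, k x + k v = ∑ w, k w :=
        Finset.sum_erase_add _ _ (Finset.mem_univ v)
      rw [hk₂, Finset.sum_update_of_mem (Finset.mem_univ v),
        Finset.sdiff_singleton_eq_erase]
      omega
    obtain ⟨k', h1, h2⟩ := ih k₂ (by omega) (by omega)
    refine ⟨k', fun w => (h1 w).trans ?_, h2⟩
    by_cases hw : w = v
    · subst hw; simp [k₂]
    · simp [k₂, Function.update_of_ne hw]

theorem stmt_1 (S : Type*) [Fintype S] (Δ' Δ : S → ℝ)
    (hΔ' : ∀ v, 0 < Δ' v) (hΔ : ∀ v, Δ' v < Δ v) :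
    ∃ Ξ : Finset (S → ℝ),
      (∀ ξ' ∈ Ξ, (∀ v, ξ' v ∈ Set.Icc (0:ℝ) 1) ∧ ∑ v, ξ' v = 1) ∧
      ∀ ξ : S → ℝ, (∀ v, 0 ≤ ξ v) → 1 ≤ ∑ v, ξ v →
        ∃ ξ' ∈ Ξ, ∀ v, ξ' v * Δ' v ≤ ξ v * Δ v := by
  classical
  cases isEmpty_or_nonempty S with
  | inl hS =>
    refine ⟨∅, by simp, fun ξ _ h1 => ?_⟩
    have : ∑ v, ξ v = 0 := by simp
    linarith
  | inr hS =>
    have hΔpos : ∀ v, (0:ℝ) < Δ v := fun v => (hΔ' v).trans (hΔ v)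
    set n := Fintype.card S with hn
    have hn0 : 0 < n := Fintype.card_pos
    set c := Finset.univ.inf' Finset.univ_nonempty (fun v => Δ v / Δ' v) with hc
    have hcv : ∀ v, c ≤ Δ v / Δ' v := fun v => Finset.inf'_le _ (Finset.mem_univ v)
    have hc1 : 1 < c := by
      rw [hc, Finset.lt_inf'_iff]
      exact fun v _ => (one_lt_div (hΔ' v)).2 (hΔ v)
    obtain ⟨N, hN⟩ := exists_nat_gt ((n : ℝ) / (c - 1))
    have hcpos : (0:ℝ) < c - 1 := by linarith
    have hNc : (n : ℝ) < N * (c - 1) := by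
      rw [div_lt_iff₀ hcpos] at hN; linarith
    have hN0 : (0:ℝ) < N := by
      have : (0:ℝ) ≤ (n : ℝ) / (c - 1) := div_nonneg (by positivity) hcpos.le
      linarith
    have hN0' : 0 < N := by exact_mod_cast hN0
    refine ⟨Finset.image (fun k : S → Fin (N+1) => fun v => (k v : ℝ) / N)
        ((Finset.univ : Finset (S → Fin (N+1))).filter (fun k => ∑ v, (k v : ℕ) = N)),
        ?_, ?_⟩
    · intro ξ' hξ'
      simp only [Finset.mem_image, Finset.mem_filter, Finset.mem_univ, true_and] at hξ'
      obtain ⟨k, hk, rfl⟩ := hξ'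
      constructor
      · intro v
        refine ⟨by positivity, ?_⟩
        have hle : (k v : ℕ) ≤ N :=
          le_trans (Finset.single_le_sum (f := fun w => (k w : ℕ))
            (fun _ _ => Nat.zero_le _) (Finset.mem_univ v)) hk.le
        rw [div_le_one hN0]
        exact_mod_cast hle
      · rw [← Finset.sum_div, div_eq_one_iff_eq hN0.ne']
        exact_mod_cast hk
    · intro ξ hξ0 hξ1
      by_cases hA : ∃ v, Δ' v ≤ ξ v * Δ v
      · obtain ⟨v, hv⟩ := hA
        set ind : S → Fin (N+1) :=
          fun w => if w = v then ⟨N, Nat.lt_succ_self N⟩ else 0 with hind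
        have hval : ∀ w, ((ind w : ℕ) : ℝ) = if w = v then (N : ℝ) else 0 := by
          intro w
          by_cases hw : w = v <;> simp [hind, hw]
        refine ⟨fun w => ((ind w : ℕ) : ℝ) / N, ?_, ?_⟩
        · simp only [Finset.mem_image, Finset.mem_filter, Finset.mem_univ, true_and]
          refine ⟨ind, ?_, rfl⟩
          have : ∑ w, ((ind w : ℕ) : ℝ) = N := by
            rw [Finset.sum_congr rfl (fun w _ => hval w), Finset.sum_ite_eq'
              Finset.univ v (fun _ => (N:ℝ))]
            simp
          exact_mod_cast this
        · intro w
          simp only [hval]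
          by_cases hw : w = v
          · subst hw
            rw [if_pos rfl, div_self hN0.ne', one_mul]
            exact hv
          · rw [if_neg hw, zero_div, zero_mul]
            exact mul_nonneg (hξ0 w) (hΔpos w).le
      · push_neg at hA
        set a : S → ℝ := fun v => ξ v * Δ v / Δ' v with ha
        have ha0 : ∀ v, 0 ≤ a v := fun v =>
          div_nonneg (mul_nonneg (hξ0 v) (hΔpos v).le) (hΔ' v).le
        have ha1 : ∀ v, a v < 1 := fun v => (div_lt_one (hΔ' v)).2 (hA v)
        have hac : ∀ v, c * ξ v ≤ a v := by
          intro v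
          calc c * ξ v ≤ (Δ v / Δ' v) * ξ v :=
                mul_le_mul_of_nonneg_right (hcv v) (hξ0 v)
            _ = a v := by rw [ha]; ring
        set k₀ : S → ℕ := fun v => ⌊(N : ℝ) * a v⌋₊ with hk₀
        have hk₀le : ∀ v, (k₀ v : ℝ) ≤ N * a v := fun v =>
          Nat.floor_le (mul_nonneg hN0.le (ha0 v))
        have hk₀ge : ∀ v, (N : ℝ) * a v - 1 ≤ k₀ v := fun v =>
          le_of_lt (by exact_mod_cast Nat.sub_one_lt_floor _)
        have hsumk : N ≤ ∑ v, k₀ v := by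
          have h1 : (N : ℝ) ≤ ∑ v, (k₀ v : ℝ) := by
            have h2 : ∑ v, ((N : ℝ) * a v - 1) ≤ ∑ v, (k₀ v : ℝ) :=
              Finset.sum_le_sum (fun v _ => hk₀ge v)
            have h3 : ∑ v, ((N : ℝ) * a v - 1) = (N : ℝ) * ∑ v, a v - n := by
              rw [Finset.sum_sub_distrib, ← Finset.mul_sum, Finset.sum_const,
                Finset.card_univ, nsmul_eq_mul, mul_one, ← hn]
            have h4 : c ≤ ∑ v, a v := by
              have h5 : ∑ v, c * ξ v ≤ ∑ v, a v := Finset.sum_le_sum (fun v _ => hac v)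
              rw [← Finset.mul_sum] at h5
              nlinarith
            nlinarith
          exact_mod_cast h1
        obtain ⟨k', hk'le, hk'sum⟩ := aux_reduce N _ k₀ rfl hsumk
        have hk'N : ∀ v, k' v ≤ N := fun v =>
          le_trans (Finset.single_le_sum (f := fun w => k' w)
            (fun _ _ => Nat.zero_le _) (Finset.mem_univ v)) hk'sum.le
        refine ⟨fun v => (((⟨k' v, Nat.lt_succ_of_le (hk'N v)⟩ : Fin (N+1)) : ℕ) : ℝ) / N,
          ?_, ?_⟩
        · simp only [Finset.mem_image, Finset.mem_filter, Finset.mem_univ, true_and]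
          exact ⟨fun v => ⟨k' v, Nat.lt_succ_of_le (hk'N v)⟩, by simpa using hk'sum, rfl⟩
        · intro v
          have h5 : (k' v : ℝ) / N ≤ a v := by
            rw [div_le_iff₀ hN0]
            calc (k' v : ℝ) ≤ k₀ v := by exact_mod_cast hk'le v
              _ ≤ N * a v := hk₀le v
              _ = a v * N := mul_comm _ _
          have h6 : a v * Δ' v = ξ v * Δ v := by
            rw [ha]; exact div_mul_cancel₀ _ (hΔ' v).ne'
          calc (((⟨k' v, Nat.lt_succ_of_le (hk'N v)⟩ : Fin (N+1)) : ℕ) : ℝ) / N * Δ' v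
              ≤ a v * Δ' v := mul_le_mul_of_nonneg_right h5 (hΔ' v).le
            _ = ξ v * Δ v := h6
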